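/- Let γ₋ < γ₊ be positive reals and define L(λ) = -2λ/(sqrt(γ₊ + λ)·sqrt(λ + γ₋)) for λ ∈ [γ₋, γ₊]. Then L is Lipschitz on [γ₋, γ₊] with Lipschitz constant at most 3/(4·sqrt(γ₋·(γ₊+γ₋)/2)). In particular, if γ₊ = γ₁ + γ₂ and γ₋ = |γ₂ - γ₁| with γ₁, γ₂ > 0, γ₁ ≠ γ₂, then the Lipschitz constant is at most (3/4)·1/sqrt(γ₋·max{γ₁, γ₂}). -/

import Mathlib

theorem L_lipschitz
    (γm γp : ℝ) (hγm : 0 < γm) (hγp : 0 < γp) (hlt : γm < γp)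
    (L : ℝ → ℝ)
    (hL : ∀ lam, L lam = -2 * lam / (Real.sqrt (γp + lam) * Real.sqrt (lam + γm))) :
    (∀ lam ∈ Set.Icc γm γp, ∀ mu ∈ Set.Icc γm γp,
      |L lam - L mu| ≤ 3 / (4 * Real.sqrt (γm * (γp + γm) / 2)) * |lam - mu|) ∧
    (∀ γ₁ γ₂ : ℝ, 0 < γ₁ → 0 < γ₂ → γ₁ ≠ γ₂ → γp = γ₁ + γ₂ → γm = |γ₂ - γ₁| →
      ∀ lam ∈ Set.Icc γm γp, ∀ mu ∈ Set.Icc γm γp,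
        |L lam - L mu| ≤ (3 / 4) * (1 / Real.sqrt (γm * max γ₁ γ₂)) * |lam - mu|) := by
  have hLeq : L = fun lam => -2 * lam / (Real.sqrt (γp + lam) * Real.sqrt (lam + γm)) :=
    funext hL
  subst hLeq
  set t : ℝ := Real.sqrt (γm * (γp + γm) / 2) with ht
  have htpos : 0 < t := Real.sqrt_pos.2 (by positivity)
  have ht2 : t ^ 2 = γm * (γp + γm) / 2 := Real.sq_sqrt (by positivity)
  set f' : ℝ → ℝ := fun x =>
    -(((γp + γm) * x + 2 * γp * γm) / Real.sqrt ((γp + x) * (x + γm)) ^ 3) with hf'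
  have hderiv : ∀ x ∈ Set.Icc γm γp,
      HasDerivWithinAt (fun lam => -2 * lam / (Real.sqrt (γp + lam) * Real.sqrt (lam + γm)))
        (f' x) (Set.Icc γm γp) x := by
    intro lam hlam
    obtain ⟨h1, h2⟩ := hlam
    have ha : (0:ℝ) < γp + lam := by linarith
    have hb : (0:ℝ) < lam + γm := by linarith
    have hsa : 0 < Real.sqrt (γp + lam) := Real.sqrt_pos.2 ha
    have hsb : 0 < Real.sqrt (lam + γm) := Real.sqrt_pos.2 hb
    have hsa2 : Real.sqrt (γp + lam) ^ 2 = γp + lam := Real.sq_sqrt ha.le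
    have hsb2 : Real.sqrt (lam + γm) ^ 2 = lam + γm := Real.sq_sqrt hb.le
    have hda : HasDerivAt (fun x => Real.sqrt (γp + x)) (1 / (2 * Real.sqrt (γp + lam))) lam := by
      have := (Real.hasDerivAt_sqrt (ne_of_gt ha)).comp lam ((hasDerivAt_id lam).const_add γp)
      simpa [Function.comp_def] using this
    have hdb : HasDerivAt (fun x => Real.sqrt (x + γm)) (1 / (2 * Real.sqrt (lam + γm))) lam := by
      have := (Real.hasDerivAt_sqrt (ne_of_gt hb)).comp lam ((hasDerivAt_id lam).add_const γm)
      simpa [Function.comp_def] using this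
    have hD := hda.mul hdb
    have hc : HasDerivAt (fun x : ℝ => -2 * x) (-2) lam := by
      simpa using (hasDerivAt_id lam).const_mul (-2 : ℝ)
    have hne : Real.sqrt (γp + lam) * Real.sqrt (lam + γm) ≠ 0 :=
      (mul_pos hsa hsb).ne'
    have hdiv := hc.div hD hne
    have heq : (-2 * (Real.sqrt (γp + lam) * Real.sqrt (lam + γm)) -
          -2 * lam * (1 / (2 * Real.sqrt (γp + lam)) * Real.sqrt (lam + γm) +
            Real.sqrt (γp + lam) * (1 / (2 * Real.sqrt (lam + γm))))) /
          (Real.sqrt (γp + lam) * Real.sqrt (lam + γm)) ^ 2 = f' lam := by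
      simp only [hf']
      have hsab : Real.sqrt ((γp + lam) * (lam + γm)) =
          Real.sqrt (γp + lam) * Real.sqrt (lam + γm) := Real.sqrt_mul ha.le _
      rw [hsab]
      field_simp
      linear_combination (lam - 2 * Real.sqrt (lam + γm) ^ 2) * hsa2 +
        (lam - 2 * (γp + lam)) * hsb2
    exact (heq ▸ hdiv).hasDerivWithinAt
  have hbound : ∀ x ∈ Set.Icc γm γp, ‖f' x‖ ≤ 3 / (4 * t) := by
    intro lam hlam
    obtain ⟨h1, h2⟩ := hlam
    have ha : (0:ℝ) < γp + lam := by linarith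
    have hb : (0:ℝ) < lam + γm := by linarith
    set s : ℝ := Real.sqrt ((γp + lam) * (lam + γm)) with hs
    have hspos : 0 < s := Real.sqrt_pos.2 (by positivity)
    have hs2 : s ^ 2 = (γp + lam) * (lam + γm) := Real.sq_sqrt (by positivity)
    have hNpos : 0 ≤ (γp + γm) * lam + 2 * γp * γm := by nlinarith
    have hst : 2 * t ≤ s := by
      nlinarith [ht2, hs2, sq_nonneg (s - 2 * t), htpos, hspos]
    have h2N : 2 * ((γp + γm) * lam + 2 * γp * γm) ≤ 3 * s ^ 2 := by
      rw [hs2]; nlinarith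
    have : ‖f' lam‖ = ((γp + γm) * lam + 2 * γp * γm) / s ^ 3 := by
      rw [hf', Real.norm_eq_abs, abs_neg, abs_div, abs_of_nonneg hNpos,
        abs_of_nonneg (by positivity : (0:ℝ) ≤ s ^ 3)]
    rw [this, div_le_div_iff₀ (by positivity) (by positivity)]
    nlinarith [mul_le_mul hst h2N (by linarith) hspos.le]
  have main : ∀ lam ∈ Set.Icc γm γp, ∀ mu ∈ Set.Icc γm γp,
      |(fun lam => -2 * lam / (Real.sqrt (γp + lam) * Real.sqrt (lam + γm))) lam -
        (fun lam => -2 * lam / (Real.sqrt (γp + lam) * Real.sqrt (lam + γm))) mu| ≤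
        3 / (4 * t) * |lam - mu| := by
    intro lam hlam mu hmu
    have := (convex_Icc γm γp).norm_image_sub_le_of_norm_hasDerivWithin_le hderiv hbound hmu hlam
    simpa [Real.norm_eq_abs] using this
  refine ⟨main, ?_⟩
  intro γ₁ γ₂ hγ1 hγ2 hne hp hm lam hlam mu hmu
  have hmax : γm * (γp + γm) / 2 = γm * max γ₁ γ₂ := by
    rcases le_total γ₁ γ₂ with h | h
    · rw [hm, hp, abs_of_nonneg (by linarith), max_eq_right h]; ring
    · rw [hm, hp, abs_of_nonpos (by linarith), max_eq_left h]; ring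
  have h := main lam hlam mu hmu
  rw [ht, hmax] at h
  calc |(fun lam => -2 * lam / (Real.sqrt (γp + lam) * Real.sqrt (lam + γm))) lam -
        (fun lam => -2 * lam / (Real.sqrt (γp + lam) * Real.sqrt (lam + γm))) mu|
      ≤ 3 / (4 * Real.sqrt (γm * max γ₁ γ₂)) * |lam - mu| := h
    _ = (3 / 4) * (1 / Real.sqrt (γm * max γ₁ γ₂)) * |lam - mu| := by ring
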